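/- For every e : ℕ → ℕ → ℕ there exists B : List Bool → Bool such that: (a) if for every γ : ℕ → Bool there exists n with b2n (γ n) ∈ E n e, then B is a bar in Cantor space; and (b) for every m, if Sec m [] holds for B, then there exists n with 0 ∈ E n e and 1 ∈ E n e. (Lemma 5.1(i): the reduction showing FT implies Σ⁰₁-Contr(AC₀,₀^{<2}), i.e. that positively inseparable enumerable subsets of ℕ intersect, and that a counterexample yields Kleene's Alternative.) -/
import Mathlib


/-- The first `n` values of `γ` as a list. -/
def seg (γ : ℕ → Bool) (n : ℕ) : List Bool := List.ofFn fun i : Fin n => γ i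

/-- `Sec B n s`: the finite sequence `s` is `n`-secured by the bar `B`. -/
def Sec (B : List Bool → Bool) : ℕ → List Bool → Prop
  | 0, s => ∃ n ≤ s.length, B (s.take n) = true
  | k + 1, s => Sec B k (s ++ [false]) ∧ Sec B k (s ++ [true])

/-- The `n`-th set enumerated by `e`. -/
def E (n : ℕ) (e : ℕ → ℕ → ℕ) : Set ℕ := {k | ∃ p, e n p = k + 1}

/-- Conversion of a bit to a natural number. -/
def b2n (b : Bool) : ℕ := if b then 1 else 0

lemma seg_length (γ : ℕ → Bool) (n : ℕ) : (seg γ n).length = n := by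
  simp [seg]

lemma seg_getD (γ : ℕ → Bool) {n i : ℕ} (h : i < n) :
    (seg γ n).getD i false = γ i := by
  rw [List.getD_eq_getElem _ _ (by simpa [seg_length] using h)]
  simp [seg]

lemma seg_take (γ : ℕ → Bool) {n m : ℕ} (h : n ≤ m) :
    (seg γ m).take n = seg γ n := by
  apply List.ext_getElem
  · simp [seg_length]; omega
  · intro i h1 h2
    simp only [List.getElem_take]
    simp [seg]

lemma sec_zero_of_sec (B : List Bool → Bool) :
    ∀ (k : ℕ) (s : List Bool), Sec B k s → ∀ l : List Bool, l.length = k →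
      Sec B 0 (s ++ l) := by
  intro k
  induction k with
  | zero => intro s hs l hl; rw [List.length_eq_zero_iff] at hl; simpa [hl] using hs
  | succ k ih =>
    intro s hs l hl
    match l with
    | b :: l' =>
      have : Sec B k (s ++ [b]) := by cases b <;> [exact hs.1; exact hs.2]
      have := ih (s ++ [b]) this l' (by simpa using hl)
      simpa using this

/-- Lemma 5.1(i): the reduction showing FT implies Σ⁰₁-Contr(AC₀,₀^{<2}). -/
theorem ft_implies_sigma01_contr_ac
    (e : ℕ → ℕ → ℕ) :
    ∃ B : List Bool → Bool,
      ((∀ γ : ℕ → Bool, ∃ n, b2n (γ n) ∈ E n e) →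
        ∀ γ : ℕ → Bool, ∃ n, B (seg γ n) = true) ∧
      (∀ m : ℕ, Sec B m [] → ∃ n, (0 : ℕ) ∈ E n e ∧ (1 : ℕ) ∈ E n e) := by
  refine ⟨fun s => decide (∃ n < s.length, ∃ p ≤ s.length,
      e n p = b2n (s.getD n false) + 1), ?_, ?_⟩
  · intro h γ
    obtain ⟨n, p, hp⟩ := h γ
    refine ⟨max (n + 1) p, ?_⟩
    rw [decide_eq_true_iff]
    refine ⟨n, by rw [seg_length]; omega, p, by rw [seg_length]; omega, ?_⟩
    rw [seg_getD γ (by omega)]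
    exact hp
  · intro m hm
    set γ : ℕ → Bool := fun n => decide (∃ p ≤ m, e n p = 1) with hγ
    have h0 := sec_zero_of_sec _ m [] hm (seg γ m) (seg_length γ m)
    simp only [List.nil_append, Sec] at h0
    obtain ⟨n, hn, hB⟩ := h0
    rw [seg_length] at hn
    simp only [seg_take γ hn] at hB; rw [decide_eq_true_iff] at hB
    obtain ⟨k, hk, p, hp, hkp⟩ := hB
    rw [seg_length] at hk hp
    rw [seg_getD γ hk] at hkp
    by_cases hg : γ k = true
    · have h0 : ∃ q ≤ m, e k q = 1 := by
        have := hg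
        rw [hγ] at this
        simpa using this
      obtain ⟨q, _, hq⟩ := h0
      refine ⟨k, ⟨q, hq⟩, ⟨p, ?_⟩⟩
      rw [hg] at hkp
      simpa [b2n] using hkp
    · exfalso
      rw [Bool.not_eq_true] at hg
      rw [hg] at hkp
      have h1 : e k p = 1 := by simpa [b2n] using hkp
      have hT : γ k = true := by
        rw [hγ]; simp only [decide_eq_true_iff]; exact ⟨p, by omega, h1⟩
      rw [hg] at hT; exact Bool.false_ne_true hT
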